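/- Let d = 2 and define a relation ≺ on 𝓑 by: B ≺ B' if and only if B ∩ B' ≠ ∅ and t(1) < t'(1), where B is a t-block and B' is a t'-block with t, t' ∈ T. Then ≺ is a strict partial order (irreflexive and transitive) on 𝓑, and two distinct blocks B, B' ∈ 𝓑 are adjacent in G if and only if B ≺ B' or B' ≺ B; that is, G is the comparability graph of ≺. -/
import Mathlib


open scoped Classical

noncomputable section

/-- The `t`-block `B_t(p) = ∏_i [s^{t i}·p i, s^{t i}·(p i + 1))`. -/
def block (d s : ℕ) (t : Fin d → ℕ) (p : Fin d → ℤ) : Set (Fin d → ℝ) :=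
  Set.univ.pi fun i =>
    Set.Ico ((s : ℝ) ^ t i * (p i : ℝ)) ((s : ℝ) ^ t i * ((p i : ℝ) + 1))

/-- The family `𝓑` of all `t`-blocks with `∑ t i = k` contained in `[0, s^k]^d`. -/
def blockFamily (d s k : ℕ) : Set (Set (Fin d → ℝ)) :=
  {B | ∃ t : Fin d → ℕ, ∃ p : Fin d → ℤ, (∑ i, t i) = k ∧
    (∀ i, 0 ≤ p i ∧ p i < (s : ℤ) ^ (k - t i)) ∧ B = block d s t p}

/-- The relation `≺` on blocks in the plane (`d = 2`): `B ≺ B'` iff `B ∩ B' ≠ ∅` and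
`t 0 < t' 0`, where `B` is a `t`-block and `B'` is a `t'`-block with `t, t' ∈ T`. -/
def blockPrec (s k : ℕ) (B B' : Set (Fin 2 → ℝ)) : Prop :=
  (B ∩ B').Nonempty ∧
  ∃ t t' : Fin 2 → ℕ, ∃ p p' : Fin 2 → ℤ,
    (∑ i, t i) = k ∧ (∑ i, t' i) = k ∧
    B = block 2 s t p ∧ B' = block 2 s t' p' ∧ t 0 < t' 0

def iv (s u : ℕ) (a : ℤ) : Set ℝ :=
  Set.Ico ((s : ℝ) ^ u * (a : ℝ)) ((s : ℝ) ^ u * ((a : ℝ) + 1))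

lemma mem_block_iff {s : ℕ} {t : Fin 2 → ℕ} {p : Fin 2 → ℤ} {x : Fin 2 → ℝ} :
    x ∈ block 2 s t p ↔ ∀ i, x i ∈ iv s (t i) (p i) := by
  simp [block, iv, Set.mem_pi]

lemma spow_pos {s : ℕ} (hs : 2 ≤ s) (u : ℕ) : (0:ℝ) < (s:ℝ) ^ u := by
  have : (0:ℝ) < (s:ℝ) := by exact_mod_cast Nat.lt_of_lt_of_le Nat.zero_lt_two hs
  positivity

lemma left_mem_iv {s : ℕ} (hs : 2 ≤ s) (u : ℕ) (a : ℤ) :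
    (s:ℝ) ^ u * (a:ℝ) ∈ iv s u a :=
  ⟨le_rfl, mul_lt_mul_of_pos_left (by linarith) (spow_pos hs u)⟩

lemma iv_subset_of_inter {s : ℕ} (hs : 2 ≤ s) {u v : ℕ} (huv : u ≤ v) {a b : ℤ}
    (h : (iv s u a ∩ iv s v b).Nonempty) : iv s u a ⊆ iv s v b := by
  obtain ⟨x, ⟨hx1, hx2⟩, ⟨hx3, hx4⟩⟩ := h
  have hsp := spow_pos hs u
  have hpow : (s:ℝ) ^ v = (s:ℝ) ^ u * (s:ℝ) ^ (v - u) := by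
    rw [← pow_add]; congr 1; omega
  have h1 : (s:ℝ) ^ v * b < (s:ℝ) ^ u * ((a:ℝ) + 1) := lt_of_le_of_lt hx3 hx2
  have h2 : (s:ℝ) ^ u * a < (s:ℝ) ^ v * ((b:ℝ) + 1) := lt_of_le_of_lt hx1 hx4
  have h1a : (s:ℝ) ^ u * ((s:ℝ) ^ (v-u) * b) < (s:ℝ) ^ u * ((a:ℝ) + 1) := by
    rw [← mul_assoc, ← hpow]; exact h1
  have h2a : (s:ℝ) ^ u * (a:ℝ) < (s:ℝ) ^ u * ((s:ℝ) ^ (v-u) * ((b:ℝ) + 1)) := by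
    rw [← mul_assoc, ← hpow]; exact h2
  have h1' : (s:ℝ) ^ (v-u) * b < (a:ℝ) + 1 := lt_of_mul_lt_mul_left h1a hsp.le
  have h2' : (a:ℝ) < (s:ℝ) ^ (v-u) * ((b:ℝ) + 1) := lt_of_mul_lt_mul_left h2a hsp.le
  have h1z : (s:ℤ) ^ (v-u) * b ≤ a := by
    have : (((s:ℤ) ^ (v-u) * b : ℤ) : ℝ) < ((a + 1 : ℤ) : ℝ) := by push_cast; linarith
    have := Int.cast_lt.mp this; omega
  have h2z : a + 1 ≤ (s:ℤ) ^ (v-u) * (b + 1) := by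
    have : ((a : ℤ) : ℝ) < (((s:ℤ) ^ (v-u) * (b + 1) : ℤ) : ℝ) := by push_cast; linarith
    have := Int.cast_lt.mp this; omega
  apply Set.Ico_subset_Ico
  · have h1r : ((s:ℝ) ^ (v-u) * b : ℝ) ≤ (a:ℝ) := by exact_mod_cast h1z
    calc (s:ℝ) ^ v * b = (s:ℝ) ^ u * ((s:ℝ) ^ (v-u) * b) := by rw [← mul_assoc, ← hpow]
    _ ≤ (s:ℝ) ^ u * a := by nlinarith
  · have h2r : (a:ℝ) + 1 ≤ (s:ℝ) ^ (v-u) * ((b:ℝ) + 1) := by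
      have := h2z
      have : ((a + 1 : ℤ) : ℝ) ≤ (((s:ℤ) ^ (v-u) * (b + 1) : ℤ) : ℝ) := by exact_mod_cast this
      push_cast at this; linarith
    calc (s:ℝ) ^ u * ((a:ℝ) + 1) ≤ (s:ℝ) ^ u * ((s:ℝ) ^ (v-u) * ((b:ℝ)+1)) := by nlinarith
    _ = (s:ℝ) ^ v * ((b:ℝ) + 1) := by rw [← mul_assoc, ← hpow]

lemma iv_eq_of_inter {s : ℕ} (hs : 2 ≤ s) {u : ℕ} {a b : ℤ}
    (h : (iv s u a ∩ iv s u b).Nonempty) : a = b := by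
  have hsub := iv_subset_of_inter hs le_rfl h
  have hmem := hsub (left_mem_iv hs u a)
  obtain ⟨h1, h2⟩ := hmem
  have hsp := spow_pos hs u
  have hb : (b:ℝ) ≤ a := le_of_mul_le_mul_left h1 hsp
  have ha : (a:ℝ) < (b:ℝ) + 1 := lt_of_mul_lt_mul_left h2 hsp.le
  have : b ≤ a := by exact_mod_cast hb
  have : (a:ℝ) < ((b + 1 : ℤ) : ℝ) := by push_cast; linarith
  have := Int.cast_lt.mp this
  omega

lemma block_rep_unique {s : ℕ} (hs : 2 ≤ s) {t t' : Fin 2 → ℕ} {p p' : Fin 2 → ℤ}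
    (h : block 2 s t p = block 2 s t' p') : t = t' ∧ p = p' := by
  have key : ∀ i, iv s (t i) (p i) = iv s (t' i) (p' i) := by
    intro i
    apply Set.eq_of_subset_of_subset
    · intro z hz
      have hx : Function.update (fun j => (s:ℝ) ^ (t j) * (p j : ℝ)) i z ∈ block 2 s t p := by
        rw [mem_block_iff]
        intro j
        by_cases hj : j = i
        · subst hj; simpa using hz
        · simp only [Function.update_of_ne hj]
          exact left_mem_iv hs _ _
      rw [h, mem_block_iff] at hx
      simpa using hx i
    · intro z hz
      have hx : Function.update (fun j => (s:ℝ) ^ (t' j) * (p' j : ℝ)) i z ∈ block 2 s t' p' := by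
        rw [mem_block_iff]
        intro j
        by_cases hj : j = i
        · subst hj; simpa using hz
        · simp only [Function.update_of_ne hj]
          exact left_mem_iv hs _ _
      rw [← h, mem_block_iff] at hx
      simpa using hx i
  have hti : ∀ i, t i = t' i ∧ p i = p' i := by
    intro i
    have hk := key i
    unfold iv at hk
    have hlt : (s:ℝ) ^ (t i) * (p i : ℝ) < (s:ℝ) ^ (t i) * ((p i : ℝ) + 1) :=
      mul_lt_mul_of_pos_left (by linarith) (spow_pos hs (t i))
    rw [Set.Ico_eq_Ico_iff (Or.inl hlt)] at hk
    obtain ⟨e1, e2⟩ := hk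
    have expand1 : (s:ℝ) ^ (t i) * ((p i : ℝ) + 1) = (s:ℝ) ^ (t i) * (p i : ℝ) + (s:ℝ) ^ (t i) := by ring
    have expand2 : (s:ℝ) ^ (t' i) * ((p' i : ℝ) + 1) = (s:ℝ) ^ (t' i) * (p' i : ℝ) + (s:ℝ) ^ (t' i) := by ring
    have hpoweq : (s:ℝ) ^ (t i) = (s:ℝ) ^ (t' i) := by
      rw [expand1, expand2] at e2; linarith
    have htnat : t i = t' i := by
      apply Nat.pow_right_injective hs
      have : ((s ^ (t i) : ℕ) : ℝ) = ((s ^ (t' i) : ℕ) : ℝ) := by push_cast; exact hpoweq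
      exact_mod_cast this
    refine ⟨htnat, ?_⟩
    rw [← hpoweq] at e1
    have hpr : (p i : ℝ) = (p' i : ℝ) :=
      mul_left_cancel₀ (ne_of_gt (spow_pos hs (t i))) e1
    exact_mod_cast hpr
  exact ⟨funext fun i => (hti i).1, funext fun i => (hti i).2⟩

/-- In dimension `d = 2`, the relation `≺` is a strict partial order on `𝓑`
(irreflexive and transitive), and two distinct blocks of `𝓑` intersect if and only if
they are comparable under `≺`: the intersection graph of `𝓑` is the comparability
graph of `≺`. -/
theorem blockGraph_is_comparability (s k : ℕ) (hs : 2 ≤ s) (hk : 1 ≤ k) :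
    (∀ B ∈ blockFamily 2 s k, ¬ blockPrec s k B B) ∧
    (∀ B ∈ blockFamily 2 s k, ∀ B' ∈ blockFamily 2 s k, ∀ B'' ∈ blockFamily 2 s k,
      blockPrec s k B B' → blockPrec s k B' B'' → blockPrec s k B B'') ∧
    (∀ B ∈ blockFamily 2 s k, ∀ B' ∈ blockFamily 2 s k, B ≠ B' →
      ((B ∩ B').Nonempty ↔ blockPrec s k B B' ∨ blockPrec s k B' B)) := by
  refine ⟨?_, ?_, ?_⟩
  · -- irreflexivity
    rintro B - ⟨-, t, t', p, p', -, -, hB, hB', hlt⟩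
    obtain ⟨htt, -⟩ := block_rep_unique hs (hB.symm.trans hB')
    rw [htt] at hlt
    exact lt_irrefl _ hlt
  · -- transitivity
    rintro B - B' - B'' -
      ⟨⟨x, hxB, hxB'⟩, t, t₁, p, p₁, ht, ht₁, hB, hB', hlt⟩
      ⟨⟨y, hyB', hyB''⟩, t₂, t₃, p₂, p₃, ht₂, ht₃, hB'2, hB'', hlt₂⟩
    obtain ⟨htt, hpp⟩ := block_rep_unique hs (hB'.symm.trans hB'2)
    subst htt; subst hpp
    rw [Fin.sum_univ_two] at ht ht₁ ht₃
    rw [hB, mem_block_iff] at hxB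
    rw [hB', mem_block_iff] at hxB'
    rw [hB'2, mem_block_iff] at hyB'
    rw [hB'', mem_block_iff] at hyB''
    have hsub0 : iv s (t 0) (p 0) ⊆ iv s (t₁ 0) (p₁ 0) :=
      iv_subset_of_inter hs hlt.le ⟨x 0, hxB 0, hxB' 0⟩
    have hsub0' : iv s (t₁ 0) (p₁ 0) ⊆ iv s (t₃ 0) (p₃ 0) :=
      iv_subset_of_inter hs hlt₂.le ⟨y 0, hyB' 0, hyB'' 0⟩
    have hsub1 : iv s (t₁ 1) (p₁ 1) ⊆ iv s (t 1) (p 1) :=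
      iv_subset_of_inter hs (by omega) ⟨x 1, hxB' 1, hxB 1⟩
    have hsub1' : iv s (t₃ 1) (p₃ 1) ⊆ iv s (t₁ 1) (p₁ 1) :=
      iv_subset_of_inter hs (by omega) ⟨y 1, hyB'' 1, hyB' 1⟩
    refine ⟨⟨![(s:ℝ) ^ (t 0) * (p 0 : ℝ), (s:ℝ) ^ (t₃ 1) * (p₃ 1 : ℝ)], ?_, ?_⟩,
      t, t₃, p, p₃, by rw [Fin.sum_univ_two]; exact ht,
      by rw [Fin.sum_univ_two]; exact ht₃, hB, hB'', lt_trans hlt hlt₂⟩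
    · rw [hB, mem_block_iff]
      intro i
      fin_cases i
      · exact left_mem_iv hs _ _
      · exact hsub1 (hsub1' (left_mem_iv hs _ _))
    · rw [hB'', mem_block_iff]
      intro i
      fin_cases i
      · exact hsub0' (hsub0 (left_mem_iv hs _ _))
      · exact left_mem_iv hs _ _
  · -- comparability
    rintro B ⟨t, p, ht, -, hB⟩ B' ⟨t', p', ht', -, hB'⟩ hne
    constructor
    · rintro ⟨x, hxB, hxB'⟩
      have hxBm := hxB; have hxB'm := hxB'
      rw [hB, mem_block_iff] at hxBm
      rw [hB', mem_block_iff] at hxB'm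
      rcases lt_trichotomy (t 0) (t' 0) with hlt | heq | hgt
      · exact Or.inl ⟨⟨x, hxB, hxB'⟩, t, t', p, p', ht, ht', hB, hB', hlt⟩
      · exfalso
        rw [Fin.sum_univ_two] at ht ht'
        have heq1 : t 1 = t' 1 := by omega
        have hp0 : p 0 = p' 0 := by
          apply iv_eq_of_inter hs (u := t 0)
          refine ⟨x 0, hxBm 0, ?_⟩
          rw [heq]; exact hxB'm 0
        have hp1 : p 1 = p' 1 := by
          apply iv_eq_of_inter hs (u := t 1)
          refine ⟨x 1, hxBm 1, ?_⟩
          rw [heq1]; exact hxB'm 1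
        have htE : t = t' := by funext i; fin_cases i; exacts [heq, heq1]
        have hpE : p = p' := by funext i; fin_cases i; exacts [hp0, hp1]
        exact hne (by rw [hB, hB', htE, hpE])
      · exact Or.inr ⟨⟨x, hxB', hxB⟩, t', t, p', p, ht', ht, hB', hB, hgt⟩
    · rintro (⟨hne', -⟩ | ⟨⟨x, h1, h2⟩, -⟩)
      · exact hne'
      · exact ⟨x, h2, h1⟩
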